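/- Let g : ℝ → ℝ be integrable with g(t) = 0 for all t < 0, and let u : ℝ → ℂ be continuous and integrable with Fourier transform U(ω) = ∫_ℝ u(t) e^{-iωt} dt integrable and vanishing for all |ω| ≥ ω_B, where ω_B > 0. Let 0 < h < π/ω_B, define x(t) = ∫_0^∞ g(τ) u(t−τ) dτ, and assume ∑_{k∈ℤ} |u(kh)| < ∞ and ∑_{k∈ℤ} |x(kh)| < ∞. Then for every real ω with |ω| < π/h, h·∑_{k∈ℤ} x(kh) e^{-iωkh} = G(ω)·( h·∑_{k∈ℤ} u(kh) e^{-iωkh} ), where G(ω) = ∫_0^∞ g(t) e^{-iωt} dt. -/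

import Mathlib

open MeasureTheory Real
open scoped FourierTransform Convolution

/-- The Fourier transform (angular-frequency convention) `F ω = ∫ f t e^{-iωt} dt`. -/
noncomputable def fourierTransform (f : ℝ → ℂ) (ω : ℝ) : ℂ :=
  ∫ t : ℝ, f t * Complex.exp (-(Complex.I * (ω : ℂ) * (t : ℂ)))

lemma ftr_eq (f : ℝ → ℂ) (ξ : ℝ) : 𝓕 f ξ = fourierTransform f (2 * π * ξ) := by
  rw [Real.fourier_real_eq_integral_exp_smul, fourierTransform]
  congr 1; ext v
  rw [smul_eq_mul, mul_comm]
  congr 1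
  push_cast
  ring_nf

lemma ft_eq (f : ℝ → ℂ) (ω : ℝ) : fourierTransform f ω = 𝓕 f (ω / (2 * π)) := by
  rw [ftr_eq]
  congr 1
  field_simp

lemma FT_int {f : ℝ → ℂ} (hW : Integrable (fourierTransform f)) : Integrable (𝓕 f) := by
  have : (fun ξ : ℝ => 𝓕 f ξ) = fun ξ => fourierTransform f (2 * π * ξ) := by
    ext ξ; exact ftr_eq f ξ
  rw [show (𝓕 f) = fun ξ : ℝ => 𝓕 f ξ from rfl, this]
  exact hW.comp_mul_left' (by positivity)

/-- Inversion in angular-frequency form. -/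
lemma inv_formula {f : ℝ → ℂ} (hc : Continuous f) (hf : Integrable f)
    (hW : Integrable (fourierTransform f)) (t : ℝ) :
    ∫ ξ : ℝ, fourierTransform f ξ * Complex.exp (Complex.I * ξ * t)
      = (2 * π) * f t := by
  have h1 : 𝓕⁻ (𝓕 f) t = f t := by rw [hc.fourierInv_fourier_eq hf (FT_int hW)]
  rw [Real.fourierInv_eq_fourier_neg,
    Real.fourier_real_eq_integral_exp_smul] at h1
  have h2 : (fun v : ℝ => Complex.exp (↑(-2 * π * v * -t) * Complex.I) • 𝓕 f v)
      = fun v : ℝ => (fun η : ℝ => fourierTransform f η * Complex.exp (Complex.I * η * t)) (2 * π * v) := by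
    ext v
    rw [smul_eq_mul, mul_comm, ftr_eq]
    congr 1
    push_cast
    ring_nf
  rw [h2, MeasureTheory.Measure.integral_comp_mul_left
    (fun η : ℝ => fourierTransform f η * Complex.exp (Complex.I * η * t)) (2 * π)] at h1
  rw [← h1]
  have hπ : |(2 * π)⁻¹| = (2*π)⁻¹ := abs_of_pos (by positivity)
  rw [hπ, Complex.real_smul]
  push_cast
  have h2π : ((2:ℂ) * π) ≠ 0 := by
    simp [Real.pi_ne_zero, Complex.ofReal_ne_zero]
  rw [← mul_assoc, mul_inv_cancel₀ h2π, one_mul]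

lemma dtft_eq (w : ℝ → ℂ) (B h : ℝ) (hc : Continuous w) (hi : Integrable w)
    (hWi : Integrable (fourierTransform w))
    (hband : ∀ ω : ℝ, B ≤ |ω| → fourierTransform w ω = 0)
    (hh : 0 < h) (hB : 0 < B) (hBh : B < π / h)
    (hsum : Summable fun k : ℤ => ‖w ((k : ℝ) * h)‖)
    (ω : ℝ) (hω : |ω| < π / h) :
    (h : ℂ) * ∑' k : ℤ,
        w ((k : ℝ) * h) * Complex.exp (-(Complex.I * (ω : ℂ) * (((k : ℝ) * h : ℝ) : ℂ)))
      = fourierTransform w ω := by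
  have hπh : 0 < π / h := lt_trans hB hBh
  have hπ0 : (π : ℂ) ≠ 0 := by exact_mod_cast Real.pi_ne_zero
  have hh0 : (h : ℂ) ≠ 0 := by exact_mod_cast hh.ne'
  set T : ℝ := 2 * π / h with hT
  have hT0 : 0 < T := by positivity
  haveI : Fact (0 < T) := ⟨hT0⟩
  set a : ℝ := -(π / h) with ha
  have haT : a + T = π / h := by rw [ha, hT]; ring
  have hWcont : Continuous (fourierTransform w) := by
    have h1 : Continuous (𝓕 w) :=
      VectorFourier.fourierIntegral_continuous Real.continuous_fourierChar
        continuous_inner hi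
    have : (fourierTransform w) = fun ω => 𝓕 w (ω / (2 * π)) := by
      ext ω; exact ft_eq w ω
    rw [this]
    exact h1.comp (continuous_id.div_const _)
  have hend : fourierTransform w a = fourierTransform w (a + T) := by
    rw [hband a (by rw [ha, abs_neg, abs_of_pos hπh]; exact hBh.le),
      hband (a + T) (by rw [haT, abs_of_pos hπh]; exact hBh.le)]
  set F : C(AddCircle T, ℂ) :=
    ⟨AddCircle.liftIco T a (fourierTransform w),
     AddCircle.liftIco_continuous hend hWcont.continuousOn⟩ with hF
  have hcoeff : ∀ n : ℤ, fourierCoeff (⇑F) n = (h : ℂ) * w (((-n : ℤ) : ℝ) * h) := by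
    intro n
    have e1 : fourierCoeff (⇑F) n
        = fourierCoeffOn (lt_add_of_pos_right a hT0) (fourierTransform w) n :=
      fourierCoeff_liftIco_eq (fourierTransform w) n
    rw [e1, fourierCoeffOn_eq_integral]
    have e2 : ∀ x : ℝ, (fourier (-n) (x : AddCircle (a + T - a)) : ℂ) • fourierTransform w x
        = fourierTransform w x
          * Complex.exp (Complex.I * (x : ℂ) * ((((-n : ℤ) : ℝ) * h : ℝ) : ℂ)) := by
      intro x
      rw [fourier_coe_apply, smul_eq_mul, mul_comm]
      congr 2
      rw [show a + T - a = T by ring, hT]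
      push_cast
      field_simp
    simp_rw [e2]
    rw [intervalIntegral.integral_of_le (by linarith : a ≤ a + T)]
    rw [MeasureTheory.setIntegral_eq_integral_of_forall_compl_eq_zero (by
      intro x hx
      have hx' : x ≤ -(π/h) ∨ π/h < x := by
        rw [Set.mem_Ioc, not_and_or] at hx
        rcases hx with h1 | h1
        · left; push_neg at h1; rw [← ha]; exact h1
        · right; push_neg at h1; rwa [haT] at h1
      have hBx : B ≤ |x| := by
        rcases hx' with h1 | h1
        · calc B ≤ π/h := hBh.le
            _ ≤ -x := by linarith
            _ ≤ |x| := neg_le_abs x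
        · calc B ≤ π/h := hBh.le
            _ ≤ x := h1.le
            _ ≤ |x| := le_abs_self x
      rw [hband x hBx, zero_mul])]
    rw [inv_formula hc hi hWi (((-n : ℤ) : ℝ) * h)]
    rw [show a + T - a = T by ring, hT, Complex.real_smul, ← mul_assoc]
    congr 1
    push_cast
    field_simp
  have hsummable : Summable (fourierCoeff (⇑F)) := by
    rw [funext hcoeff]
    apply Summable.mul_left
    have h1 : Summable fun k : ℤ => w ((k : ℝ) * h) := hsum.of_norm
    exact ((Equiv.neg ℤ).summable_iff).mpr h1
  have hps := has_pointwise_sum_fourier_series_of_summable hsummable (↑ω : AddCircle T)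
  have hFω : F (↑ω : AddCircle T) = fourierTransform w ω := by
    show AddCircle.liftIco T a (fourierTransform w) ↑ω = fourierTransform w ω
    apply AddCircle.liftIco_coe_apply
    rw [Set.mem_Ico, haT, ha]
    constructor
    · linarith [(abs_lt.mp hω).1]
    · exact (abs_lt.mp hω).2
  have hterm : ∀ k : ℤ, fourierCoeff (⇑F) (-k) • fourier (-k) ((ω : ℝ) : AddCircle T)
      = (h : ℂ) * (w ((k : ℝ) * h)
          * Complex.exp (-(Complex.I * (ω : ℂ) * (((k : ℝ) * h : ℝ) : ℂ)))) := by
    intro k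
    rw [hcoeff, smul_eq_mul, fourier_coe_apply, mul_assoc]
    congr 3
    · push_cast; ring
    · rw [hT]
      push_cast
      field_simp
  have H : HasSum
      (fun k : ℤ => (h : ℂ) * (w ((k : ℝ) * h)
          * Complex.exp (-(Complex.I * (ω : ℂ) * (((k : ℝ) * h : ℝ) : ℂ)))))
      (fourierTransform w ω) := by
    have h2 := ((Equiv.neg ℤ).hasSum_iff).mpr hps
    rw [hFω] at h2
    have h3 : ((fun n : ℤ => fourierCoeff (⇑F) n • fourier n ((ω : ℝ) : AddCircle T)) ∘ (Equiv.neg ℤ))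
        = fun k : ℤ => (h : ℂ) * (w ((k : ℝ) * h)
          * Complex.exp (-(Complex.I * (ω : ℂ) * (((k : ℝ) * h : ℝ) : ℂ)))) := by
      ext k
      simp only [Function.comp_apply, Equiv.neg_apply]
      exact hterm k
    rwa [h3] at h2
  rw [← H.tsum_eq, tsum_mul_left]

lemma bdd_of_ft_int {f : ℝ → ℂ} (hc : Continuous f) (hf : Integrable f)
    (hW : Integrable (fourierTransform f)) :
    BddAbove (Set.range fun t => ‖f t‖) := by
  refine ⟨(2 * π)⁻¹ * ∫ ξ : ℝ, ‖fourierTransform f ξ‖, ?_⟩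
  rintro r ⟨t, rfl⟩
  have h1 : ‖((2 : ℂ) * (π : ℂ)) * f t‖ ≤ ∫ ξ : ℝ, ‖fourierTransform f ξ‖ := by
    rw [← inv_formula hc hf hW t]
    calc ‖∫ ξ : ℝ, fourierTransform f ξ * Complex.exp (Complex.I * ξ * t)‖
        ≤ ∫ ξ : ℝ, ‖fourierTransform f ξ * Complex.exp (Complex.I * ξ * t)‖ :=
          norm_integral_le_integral_norm _
      _ = ∫ ξ : ℝ, ‖fourierTransform f ξ‖ := by
          congr 1; ext ξ
          rw [norm_mul]
          have : ‖Complex.exp (Complex.I * ξ * t)‖ = 1 := by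
            rw [Complex.norm_exp]
            simp
          rw [this, mul_one]
  have h2 : ‖((2 : ℂ) * (π : ℂ))‖ = 2 * π := by
    rw [norm_mul]
    simp [Real.pi_pos.le]
  rw [norm_mul, h2] at h1
  have hπ : (0:ℝ) < 2 * π := by positivity
  show ‖f t‖ ≤ (2 * π)⁻¹ * ∫ ξ : ℝ, ‖fourierTransform f ξ‖
  rw [inv_mul_eq_div]
  exact (le_div_iff₀' hπ).mpr h1

open scoped Convolution

lemma ft_conv (f u : ℝ → ℂ) (hf : Integrable f) (hu : Integrable u) (ω : ℝ) :
    fourierTransform (f ⋆[ContinuousLinearMap.mul ℂ ℂ] u) ω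
      = fourierTransform f ω * fourierTransform u ω := by
  have hbase : Integrable
      (fun p : ℝ × ℝ => f p.2 * u (p.1 - p.2) * Complex.exp (-(Complex.I * ω * p.1)))
      (volume.prod volume) := by
    have h1 := hf.convolution_integrand (ContinuousLinearMap.mul ℂ ℂ) hu
    simp only [ContinuousLinearMap.mul_apply'] at h1
    have h2 := h1.bdd_mul
      (hf := (Complex.continuous_exp.comp (by continuity :
        Continuous fun p : ℝ × ℝ => -(Complex.I * ω * p.1))).aestronglyMeasurable)
      (c := 1) (hf_bound := Filter.Eventually.of_forall fun p => by
        simp only [Function.comp_apply, Complex.norm_exp]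
        simp)
    exact h2.congr (Filter.Eventually.of_forall fun p => by dsimp; ring)
  calc fourierTransform (f ⋆[ContinuousLinearMap.mul ℂ ℂ] u) ω
      = ∫ t : ℝ, ∫ τ : ℝ, f τ * u (t - τ) * Complex.exp (-(Complex.I * ω * t)) := by
        rw [fourierTransform]
        congr 1; ext t
        rw [convolution_def]
        simp only [ContinuousLinearMap.mul_apply']
        exact (integral_mul_const _ _).symm
    _ = ∫ τ : ℝ, ∫ t : ℝ, f τ * u (t - τ) * Complex.exp (-(Complex.I * ω * t)) :=
        MeasureTheory.integral_integral_swap hbase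
    _ = ∫ τ : ℝ, f τ * Complex.exp (-(Complex.I * ω * τ)) * fourierTransform u ω := by
        congr 1; ext τ
        have key : ∀ t : ℝ, f τ * u (t - τ) * Complex.exp (-(Complex.I * ω * t))
            = (fun s : ℝ => f τ * Complex.exp (-(Complex.I * ω * τ))
                * (u s * Complex.exp (-(Complex.I * ω * s)))) (t - τ) := by
          intro t
          dsimp only
          have e : Complex.exp (-(Complex.I * ω * (t : ℂ)))
              = Complex.exp (-(Complex.I * ω * ((t - τ : ℝ) : ℂ)))
                * Complex.exp (-(Complex.I * ω * (τ : ℂ))) := by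
            rw [← Complex.exp_add]; congr 1; push_cast; ring
          rw [e]; ring
        simp_rw [key]
        rw [MeasureTheory.integral_sub_right_eq_self
          (fun s : ℝ => f τ * Complex.exp (-(Complex.I * ω * τ))
            * (u s * Complex.exp (-(Complex.I * ω * s)))) τ]
        rw [MeasureTheory.integral_const_mul, fourierTransform]
    _ = fourierTransform f ω * fourierTransform u ω := by
        rw [MeasureTheory.integral_mul_const]
        rfl

lemma ft_cont {f : ℝ → ℂ} (hf : Integrable f) : Continuous (fourierTransform f) := by
  have h1 : Continuous (𝓕 f) :=
    VectorFourier.fourierIntegral_continuous Real.continuous_fourierChar continuous_inner hf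
  have : (fourierTransform f) = fun ω => 𝓕 f (ω / (2 * π)) := by ext ω; exact ft_eq f ω
  rw [this]
  exact h1.comp (continuous_id.div_const _)

/-- The frequency-response identity of Proposition 1 in product form: on `|ω| < π/h`,
the DTFT of the sampled output equals the continuous-time frequency response `G(ω)`
times the DTFT of the sampled input. -/
theorem dtft_output_eq_G_mul_dtft_input
    (g : ℝ → ℝ) (u : ℝ → ℂ) (ωB h : ℝ)
    (hg_int : Integrable g) (hg_causal : ∀ t : ℝ, t < 0 → g t = 0)
    (hu_cont : Continuous u) (hu_int : Integrable u)
    (hU_int : Integrable (fourierTransform u))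
    (hband : ∀ ω : ℝ, ωB ≤ |ω| → fourierTransform u ω = 0)
    (hωB : 0 < ωB) (hh : 0 < h) (hhB : h < π / ωB)
    (x : ℝ → ℂ) (hx : ∀ t : ℝ, x t = ∫ τ in Set.Ioi (0 : ℝ), (g τ : ℂ) * u (t - τ))
    (hsumu : Summable fun k : ℤ => ‖u ((k : ℝ) * h)‖)
    (hsumx : Summable fun k : ℤ => ‖x ((k : ℝ) * h)‖) :
    ∀ ω : ℝ, |ω| < π / h →
      (h : ℂ) * ∑' k : ℤ,
          x ((k : ℝ) * h) * Complex.exp (-(Complex.I * (ω : ℂ) * (((k : ℝ) * h : ℝ) : ℂ)))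
        = (∫ t in Set.Ioi (0 : ℝ), (g t : ℂ) * Complex.exp (-(Complex.I * (ω : ℂ) * (t : ℂ))))
          * ((h : ℂ) * ∑' k : ℤ,
              u ((k : ℝ) * h) * Complex.exp (-(Complex.I * (ω : ℂ) * (((k : ℝ) * h : ℝ) : ℂ)))) := by
  intro ω hω
  have hBh : ωB < π / h := by
    rw [lt_div_iff₀ hh]
    rw [lt_div_iff₀ hωB] at hhB
    linarith [hhB]
  set gc : ℝ → ℂ := fun t => (g t : ℂ) with hgc
  have hgc_int : Integrable gc := hg_int.ofReal
  have hae0 : ∀ᵐ τ : ℝ, τ ≠ (0 : ℝ) := by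
    rw [MeasureTheory.ae_iff]
    simp only [ne_eq, not_not]
    rw [show {τ : ℝ | τ = 0} = {(0 : ℝ)} from Set.setOf_eq_eq_singleton]
    exact measure_singleton 0
  have hvanish : ∀ F : ℝ → ℂ, ∀ᵐ τ : ℝ, τ ∉ Set.Ioi (0 : ℝ) → gc τ * F τ = 0 := by
    intro F
    filter_upwards [hae0] with τ hτ hmem
    have hlt : τ < 0 := lt_of_le_of_ne (by simpa using hmem) hτ
    rw [hgc]
    simp [hg_causal τ hlt]
  have hxconv : x = gc ⋆[ContinuousLinearMap.mul ℂ ℂ] u := by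
    funext t
    rw [hx t, convolution_def]
    simp only [ContinuousLinearMap.mul_apply']
    exact MeasureTheory.setIntegral_eq_integral_of_ae_compl_eq_zero (hvanish (fun τ => u (t - τ)))
  have hu_bdd := bdd_of_ft_int hu_cont hu_int hU_int
  have hx_cont : Continuous x := by
    rw [hxconv]
    exact hu_bdd.continuous_convolution_right_of_integrable (ContinuousLinearMap.mul ℂ ℂ)
      hgc_int hu_cont
  have hx_int : Integrable x := by
    rw [hxconv]
    exact hgc_int.integrable_convolution (ContinuousLinearMap.mul ℂ ℂ) hu_int
  have hxft : ∀ ω' : ℝ, fourierTransform x ω' = fourierTransform gc ω' * fourierTransform u ω' := by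
    intro ω'
    rw [hxconv]
    exact ft_conv gc u hgc_int hu_int ω'
  have hXcont : Continuous (fourierTransform x) := by
    have : fourierTransform x = fun ω' => fourierTransform gc ω' * fourierTransform u ω' := by
      ext ω'; exact hxft ω'
    rw [this]
    exact (ft_cont hgc_int).mul (ft_cont hu_int)
  have hXint : Integrable (fourierTransform x) := by
    have hbound : ∀ ω' : ℝ, ‖fourierTransform x ω'‖
        ≤ (∫ τ : ℝ, ‖gc τ‖) * ‖fourierTransform u ω'‖ := by
      intro ω'
      rw [hxft ω', norm_mul]
      have h1 : ‖fourierTransform gc ω'‖ ≤ ∫ τ : ℝ, ‖gc τ‖ := by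
        rw [fourierTransform]
        calc ‖∫ τ : ℝ, gc τ * Complex.exp (-(Complex.I * ω' * τ))‖
            ≤ ∫ τ : ℝ, ‖gc τ * Complex.exp (-(Complex.I * ω' * τ))‖ :=
              norm_integral_le_integral_norm _
          _ = ∫ τ : ℝ, ‖gc τ‖ := by
              congr 1; ext τ
              rw [norm_mul]
              have : ‖Complex.exp (-(Complex.I * ω' * (τ:ℂ)))‖ = 1 := by
                rw [Complex.norm_exp]; simp
              rw [this, mul_one]
      exact mul_le_mul_of_nonneg_right h1 (norm_nonneg _)
    exact ((hU_int.norm.const_mul _).mono' hXcont.aestronglyMeasurable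
      (Filter.Eventually.of_forall hbound))
  have hXband : ∀ ω' : ℝ, ωB ≤ |ω'| → fourierTransform x ω' = 0 := by
    intro ω' hb
    rw [hxft ω', hband ω' hb, mul_zero]
  have hux := dtft_eq u ωB h hu_cont hu_int hU_int hband hh hωB hBh hsumu ω hω
  have hxx := dtft_eq x ωB h hx_cont hx_int hXint hXband hh hωB hBh hsumx ω hω
  have hgio : (∫ t in Set.Ioi (0:ℝ), (g t : ℂ) * Complex.exp (-(Complex.I * ω * (t:ℂ))))
      = fourierTransform gc ω := by
    rw [fourierTransform]
    exact MeasureTheory.setIntegral_eq_integral_of_ae_compl_eq_zero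
      (hvanish (fun t => Complex.exp (-(Complex.I * ω * (t:ℂ)))))
  rw [hxx, hgio, hux, hxft ω]
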